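/- (Reversibility of the RWT-RWA target-graph chain.) Let w : U → ℝ be a nonnegative weight function with W := ∑_{u∈U} w_u > 0 and d_u + w_u > 0 for every u ∈ U. Consider the Markov chain on the augmented state space U ∪ {j} (j a virtual jumper node not in U) with transitions: from u ∈ U, move to each G-neighbor u' of u with probability 1/(d_u + w_u) and to j with probability w_u/(d_u + w_u); from j, move to u ∈ U with probability w_u/W (the jump target distribution produced by the Metropolis–Hastings chain). Let Z = 2|E| + 2W and define π_u = (d_u + w_u)/Z for u ∈ U and π_j = W/Z. Then π is a probability distribution on U ∪ {j}, and the chain satisfies detailed balance with respect to π: π_x P(x,y) = π_y P(y,x) for all states x, y ∈ U ∪ {j}; hence the stationary probability of visiting u ∈ U is proportional to d_u + w_u. -/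

import Mathlib

open Finset

/-- Reversibility of the RWT-RWA target-graph chain: with
nonnegative weights `w`, `W = ∑ w > 0`, and jump target distribution `w u / W`
(produced by the Metropolis–Hastings chain), the augmented chain on `U ∪ {j}`
(encoded as `Option U`, with the jumper node `j` encoded by `none`) satisfies
detailed balance with respect to `π u = (d u + w u)/Z`, `π j = W/Z`,
`Z = 2|E| + 2W`, and `π` sums to 1; hence the stationary probability of
visiting `u ∈ U` is proportional to `d u + w u`. -/
theorem rwtrwa_target_chain_reversible
    {U : Type*} [Fintype U] [DecidableEq U]
    (G : SimpleGraph U) [DecidableRel G.Adj]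
    (w : U → ℝ) (hwnn : ∀ u, 0 ≤ w u)
    (W : ℝ) (hW : W = ∑ u : U, w u) (hWpos : 0 < W)
    (hdw : ∀ u, 0 < (G.degree u : ℝ) + w u)
    (P : Option U → Option U → ℝ)
    (hP1 : ∀ u u' : U, P (some u) (some u') =
      if G.Adj u u' then 1 / ((G.degree u : ℝ) + w u) else 0)
    (hP2 : ∀ u : U, P (some u) none = w u / ((G.degree u : ℝ) + w u))
    (hP3 : ∀ u : U, P none (some u) = w u / W)
    (hP4 : P none none = 0)
    (Z : ℝ) (hZ : Z = 2 * (G.edgeFinset.card : ℝ) + 2 * W)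
    (pi : Option U → ℝ)
    (hpi1 : ∀ u : U, pi (some u) = ((G.degree u : ℝ) + w u) / Z)
    (hpi2 : pi none = W / Z) :
    (∑ x : Option U, pi x) = 1
    ∧ (∀ x y : Option U, pi x * P x y = pi y * P y x) := by
  have hZpos : 0 < Z := by
    rw [hZ]; positivity
  constructor
  · rw [Fintype.sum_option, hpi2]
    simp only [hpi1]
    rw [← Finset.sum_div, Finset.sum_add_distrib, ← hW,
      ← Nat.cast_sum, G.sum_degrees_eq_twice_card_edges]
    field_simp [hZ]; rw [hZ]; push_cast; ring
  · intro x y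
    match x, y with
    | none, none => rfl
    | some u, none =>
      rw [hpi1, hpi2, hP2 u, hP3 u]
      field_simp [(hdw u).ne']
    | none, some u =>
      rw [hpi1, hpi2, hP2 u, hP3 u]
      field_simp [(hdw u).ne']
    | some u, some v =>
      rw [hpi1, hpi1, hP1 u v, hP1 v u]
      by_cases h : G.Adj u v
      · rw [if_pos h, if_pos h.symm]
        field_simp [(hdw u).ne', (hdw v).ne']
      · rw [if_neg h, if_neg (fun h' => h h'.symm)]
        ring
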